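/- arXiv:1112.6172 — 3 statements merged into one kernel-verified Lean document; each statement's English description precedes it below -/
import Mathlib

section
/- Let G and H be finite simple graphs and let U be an independent set of the categorical (tensor) product G × H. Define A = {(x,y) ∈ U : there is no (x',y) ∈ U with {x,x'} ∈ E(G)} and B = U \ A. Then for every vertex y of H, the section A(y) = {x : (x,y) ∈ A} is an independent set of G, and for every vertex x of G, the section B(x) = {y : (x,y) ∈ B} is an independent set of H. -/
open Filter

/-- Categorical (tensor) product of two simple graphs. -/
def tensorProd {α β : Type*} (G : SimpleGraph α) (H : SimpleGraph β) :
    SimpleGraph (α × β) where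
  Adj p q := G.Adj p.1 q.1 ∧ H.Adj p.2 q.2
  symm := ⟨fun p q h => ⟨h.1.symm, h.2.symm⟩⟩
  loopless := ⟨fun p h => G.loopless.irrefl _ h.1⟩

theorem stmt0 {α β : Type*} [Fintype α] [Fintype β]
    (G : SimpleGraph α) (H : SimpleGraph β) (U : Set (α × β))
    (hU : ∀ p ∈ U, ∀ q ∈ U, ¬ (tensorProd G H).Adj p q)
    (A B : Set (α × β))
    (hA : A = {p | p ∈ U ∧ ¬ ∃ x', (x', p.2) ∈ U ∧ G.Adj p.1 x'})
    (hB : B = U \ A) :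
    (∀ y : β, ∀ x₁ ∈ {x | (x, y) ∈ A}, ∀ x₂ ∈ {x | (x, y) ∈ A}, ¬ G.Adj x₁ x₂) ∧
    (∀ x : α, ∀ y₁ ∈ {y | (x, y) ∈ B}, ∀ y₂ ∈ {y | (x, y) ∈ B}, ¬ H.Adj y₁ y₂) := by
  subst hA hB
  constructor
  · rintro y x₁ ⟨h₁U, h₁⟩ x₂ ⟨h₂U, _⟩ hadj
    exact h₁ ⟨x₂, h₂U, hadj⟩
  · rintro x y₁ ⟨h₁U, h₁⟩ y₂ ⟨h₂U, h₂⟩ hadj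
    simp only [Set.mem_setOf_eq, not_and, not_not] at h₁
    obtain ⟨x', hx'U, hGx⟩ := h₁ h₁U
    exact hU (x, y₂) h₂U (x', y₁) hx'U ⟨hGx, hadj.symm⟩
end

section
/- Let G and H be finite simple graphs and let U be an independent set of G × H. With A = {(x,y) ∈ U : no (x',y) ∈ U has {x,x'} ∈ E(G)} and B = U \ A, define N^G(A) = {(x,y) : x ∈ N_G(A(y))} and N^H(B) = {(x,y) : y ∈ N_H(B(x))}, where A(y) = {x : (x,y) ∈ A} and B(x) = {y : (x,y) ∈ B}. Then the four sets A, B, N^G(A), N^H(B) are pairwise disjoint subsets of V(G × H). -/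
open Filter

theorem stmt1 {α β : Type*} [Fintype α] [Fintype β]
    (G : SimpleGraph α) (H : SimpleGraph β) (U : Set (α × β))
    (hU : ∀ p ∈ U, ∀ q ∈ U, ¬ (tensorProd G H).Adj p q)
    (A B NG NH : Set (α × β))
    (hA : A = {p | p ∈ U ∧ ¬ ∃ x', (x', p.2) ∈ U ∧ G.Adj p.1 x'})
    (hB : B = U \ A)
    (hNG : NG = {p | ∃ x', (x', p.2) ∈ A ∧ G.Adj x' p.1})
    (hNH : NH = {p | ∃ y', (p.1, y') ∈ B ∧ H.Adj y' p.2}) :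
    Disjoint A B ∧ Disjoint A NG ∧ Disjoint A NH ∧
    Disjoint B NG ∧ Disjoint B NH ∧ Disjoint NG NH := by
  subst hA hB hNG hNH
  refine ⟨?_, ?_, ?_, ?_, ?_, ?_⟩ <;> rw [Set.disjoint_left]
  · rintro p hp ⟨_, hnA⟩; exact hnA hp
  · rintro p ⟨hpU, hno⟩ ⟨x', ⟨hx'U, _⟩, hadj⟩
    exact hno ⟨x', hx'U, hadj.symm⟩
  · rintro p ⟨hpU, hno⟩ ⟨y', ⟨hyU, hnA⟩, hadj⟩
    simp only [Set.mem_setOf_eq, not_and, not_not] at hnA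
    obtain ⟨x', hx'U, hGadj⟩ := hnA hyU
    exact hU _ hx'U _ hpU ⟨hGadj.symm, hadj⟩
  · rintro p ⟨hpU, _⟩ ⟨x', ⟨_, hno⟩, hadj⟩
    exact hno ⟨p.1, hpU, hadj⟩
  · rintro p ⟨hpU, hnA⟩ ⟨y', ⟨hyU, _⟩, hadj⟩
    simp only [Set.mem_setOf_eq, not_and, not_not] at hnA
    obtain ⟨x', hx'U, hGadj⟩ := hnA hpU
    exact hU _ hx'U _ hyU ⟨hGadj.symm, hadj.symm⟩
  · rintro p ⟨x', ⟨hx'U, _⟩, hGadj⟩ ⟨y', ⟨hyU, _⟩, hHadj⟩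
    exact hU _ hx'U _ hyU ⟨hGadj, hHadj.symm⟩
end

section
/- Let G and H be finite simple graphs and let U be an independent set of G × H. Then every independent set U of G × H satisfies |N_{G×H}(U)| ≥ min{b(G), b(H)} · |U|, where b(K) = min{|N_K(W)|/|W| : W a nonempty independent set of K}, provided b(G) ≥ 1 or b(H) ≥ 1. -/
open scoped Classical
open Filter

/-- A finset is independent. -/
def IsIndep {α : Type*} (G : SimpleGraph α) (U : Finset α) : Prop :=
  ∀ u ∈ U, ∀ v ∈ U, ¬ G.Adj u v

/-- Neighborhood of a finset. -/
noncomputable def nbhd {α : Type*} [Fintype α] (G : SimpleGraph α) (U : Finset α) : Finset α :=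
  Finset.univ.filter (fun v => ∃ u ∈ U, G.Adj u v)

/-- Independence number. -/
noncomputable def alphaNum {α : Type*} [Fintype α] (G : SimpleGraph α) : ℕ :=
  sSup {n : ℕ | ∃ U : Finset α, IsIndep G U ∧ U.card = n}

/-- Independence ratio. -/
noncomputable def iRatio {α : Type*} [Fintype α] (G : SimpleGraph α) : ℝ :=
  (alphaNum G : ℝ) / (Fintype.card α : ℝ)

/-- a(G): the maximum of |U|/(|U|+|N(U)|) over nonempty independent sets. -/
noncomputable def aRatio {α : Type*} [Fintype α] (G : SimpleGraph α) : ℝ :=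
  sSup {r : ℝ | ∃ U : Finset α, U.Nonempty ∧ IsIndep G U ∧
    r = (U.card : ℝ) / ((U.card : ℝ) + ((nbhd G U).card : ℝ))}

/-- b(G): the minimum of |N(U)|/|U| over nonempty independent sets. -/
noncomputable def bRatio {α : Type*} [Fintype α] (G : SimpleGraph α) : ℝ :=
  sInf {r : ℝ | ∃ U : Finset α, U.Nonempty ∧ IsIndep G U ∧
    r = ((nbhd G U).card : ℝ) / (U.card : ℝ)}

/-- a*(G). -/
noncomputable def aStar {α : Type*} [Fintype α] (G : SimpleGraph α) : ℝ :=
  if aRatio G ≤ 1/2 then aRatio G else 1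

/-- k-th categorical power of G. -/
def tensorPow {α : Type*} (G : SimpleGraph α) (k : ℕ) : SimpleGraph (Fin k → α) where
  Adj x y := x ≠ y ∧ ∀ i, G.Adj (x i) (y i)
  symm := ⟨fun x y h => ⟨h.1.symm, fun i => (h.2 i).symm⟩⟩
  loopless := ⟨fun x h => h.1 rfl⟩

/-- Disjoint union of two simple graphs. -/
def disjUnion {α β : Type*} (G : SimpleGraph α) (H : SimpleGraph β) :
    SimpleGraph (α ⊕ β) where
  Adj p q := match p, q with
    | Sum.inl a, Sum.inl b => G.Adj a b
    | Sum.inr a, Sum.inr b => H.Adj a b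
    | _, _ => False
  symm := ⟨by rintro (a|a) (b|b) h <;> simp_all <;> exact h.symm⟩
  loopless := ⟨by rintro (a|a) h <;> simp_all⟩


section AuxLemmas

variable {γ : Type*} [Fintype γ]

lemma mem_nbhd_iff (K : SimpleGraph γ) (A : Finset γ) (v : γ) :
    v ∈ nbhd K A ↔ ∃ u ∈ A, K.Adj u v := by
  simp [nbhd]

lemma nbhd_mono (K : SimpleGraph γ) {A B : Finset γ} (h : A ⊆ B) :
    nbhd K A ⊆ nbhd K B := by
  intro v hv
  rw [mem_nbhd_iff] at hv ⊢
  obtain ⟨u, hu, huv⟩ := hv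
  exact ⟨u, h hu, huv⟩

lemma bRatio_nonneg [Nonempty γ] (K : SimpleGraph γ) : 0 ≤ bRatio K := by
  apply le_csInf
  · refine ⟨_, ⟨{Classical.arbitrary γ}, Finset.singleton_nonempty _, ?_, rfl⟩⟩
    intro u hu v hv
    simp only [Finset.mem_singleton] at hu hv
    subst hu; subst hv
    exact fun hadj => K.loopless.irrefl _ hadj
  · rintro r ⟨Ws, hne, hind, rfl⟩
    positivity

lemma bRatio_mul_le (K : SimpleGraph γ) (I : Finset γ) (hI : IsIndep K I) :
    bRatio K * (I.card : ℝ) ≤ ((nbhd K I).card : ℝ) := by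
  rcases I.eq_empty_or_nonempty with h | h
  · subst h; simp
  · have hbdd : BddBelow {r : ℝ | ∃ V : Finset γ, V.Nonempty ∧ IsIndep K V ∧
        r = ((nbhd K V).card : ℝ) / (V.card : ℝ)} := by
      refine ⟨0, ?_⟩
      rintro r ⟨V, hV, _, rfl⟩
      positivity
    have hmem := csInf_le hbdd ⟨I, h, hI, rfl⟩
    have hc : (0:ℝ) < I.card := by exact_mod_cast h.card_pos
    exact (le_div_iff₀ hc).1 hmem

/-- Expansion lemma: `|N(A)| ≥ b·|A \ N(A)| + |A ∩ N(A)|`. -/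
lemma expansion (K : SimpleGraph γ) (A : Finset γ) :
    bRatio K * ((A \ nbhd K A).card : ℝ) + ((A ∩ nbhd K A).card : ℝ)
      ≤ ((nbhd K A).card : ℝ) := by
  set I := A \ nbhd K A with hIdef
  have hInd : IsIndep K I := by
    intro u hu v hv hadj
    rw [hIdef, Finset.mem_sdiff] at hu hv
    exact hv.2 ((mem_nbhd_iff K A v).2 ⟨u, hu.1, hadj⟩)
  have hdisj : Disjoint (nbhd K I) (A ∩ nbhd K A) := by
    rw [Finset.disjoint_left]
    intro v hv hv'
    obtain ⟨u, hu, hadj⟩ := (mem_nbhd_iff K I v).1 hv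
    rw [hIdef, Finset.mem_sdiff] at hu
    exact hu.2 ((mem_nbhd_iff K A u).2 ⟨v, (Finset.mem_inter.1 hv').1, hadj.symm⟩)
  have hsub : nbhd K I ∪ (A ∩ nbhd K A) ⊆ nbhd K A := by
    intro v hv
    rcases Finset.mem_union.1 hv with hv | hv
    · exact nbhd_mono K (Finset.sdiff_subset) hv
    · exact (Finset.mem_inter.1 hv).2
  have hcard : (nbhd K I).card + (A ∩ nbhd K A).card ≤ (nbhd K A).card := by
    rw [← Finset.card_union_of_disjoint hdisj]
    exact Finset.card_le_card hsub
  have h1 := bRatio_mul_le K I hInd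
  have h2 : ((nbhd K I).card : ℝ) + ((A ∩ nbhd K A).card : ℝ) ≤ ((nbhd K A).card : ℝ) := by
    exact_mod_cast hcard
  linarith

end AuxLemmas

lemma card_filter_fst {α β : Type*} [Fintype α] [Fintype β] (P : α → β → Prop)
    [∀ a b, Decidable (P a b)] :
    (Finset.univ.filter (fun p : α × β => P p.1 p.2)).card
      = ∑ x : α, (Finset.univ.filter (fun y => P x y)).card := by
  rw [Finset.card_eq_sum_card_fiberwise (f := Prod.fst) (t := (Finset.univ : Finset α))
      (fun p _ => Finset.mem_univ _)]
  refine Finset.sum_congr rfl fun x _ => ?_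
  have : (Finset.univ.filter (fun p : α × β => P p.1 p.2)).filter (fun p => p.1 = x)
      = (Finset.univ.filter (fun y => P x y)).image (fun y => (x, y)) := by
    ext ⟨a, b⟩
    simp only [Finset.mem_filter, Finset.mem_image, Finset.mem_univ, true_and]
    constructor
    · rintro ⟨hP, rfl⟩
      exact ⟨b, hP, rfl⟩
    · rintro ⟨y, hy, heq⟩
      obtain ⟨rfl, rfl⟩ := Prod.mk.injEq .. ▸ heq
      exact ⟨hy, rfl⟩
  rw [this, Finset.card_image_of_injective _ (fun a b hab => by simpa using hab)]

lemma card_filter_snd {α β : Type*} [Fintype α] [Fintype β] (P : α → β → Prop)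
    [∀ a b, Decidable (P a b)] :
    (Finset.univ.filter (fun p : α × β => P p.1 p.2)).card
      = ∑ y : β, (Finset.univ.filter (fun x => P x y)).card := by
  rw [Finset.card_eq_sum_card_fiberwise (f := Prod.snd) (t := (Finset.univ : Finset β))
      (fun p _ => Finset.mem_univ _)]
  refine Finset.sum_congr rfl fun y _ => ?_
  have : (Finset.univ.filter (fun p : α × β => P p.1 p.2)).filter (fun p => p.2 = y)
      = (Finset.univ.filter (fun x => P x y)).image (fun x => (x, y)) := by
    ext ⟨a, b⟩
    simp only [Finset.mem_filter, Finset.mem_image, Finset.mem_univ, true_and]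
    constructor
    · rintro ⟨hP, rfl⟩
      exact ⟨a, hP, rfl⟩
    · rintro ⟨x, hx, heq⟩
      obtain ⟨rfl, rfl⟩ := Prod.mk.injEq .. ▸ heq
      exact ⟨hx, rfl⟩
  rw [this, Finset.card_image_of_injective _ (fun a b hab => by simpa using hab)]

lemma univ_filter_mem {γ : Type*} [Fintype γ] (s : Finset γ) :
    Finset.univ.filter (fun v => v ∈ s) = s := by
  ext v; simp

theorem stmt4 {α β : Type*} [Fintype α] [Fintype β] [Nonempty α] [Nonempty β]
    (G : SimpleGraph α) (H : SimpleGraph β)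
    (h : 1 ≤ bRatio G ∨ 1 ≤ bRatio H)
    (U : Finset (α × β)) (hU : IsIndep (tensorProd G H) U) :
    min (bRatio G) (bRatio H) * (U.card : ℝ) ≤ ((nbhd (tensorProd G H) U).card : ℝ) := by
  classical
  have hbG0 : 0 ≤ bRatio G := bRatio_nonneg G
  have hbH0 : 0 ≤ bRatio H := bRatio_nonneg H
  set C : β → Finset α := fun y => Finset.univ.filter (fun x => (x, y) ∈ U) with hC
  set W : α → Finset β := fun x' => Finset.univ.filter (fun y => x' ∈ nbhd G (C y)) with hW
  -- membership unfoldings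
  have hmemC : ∀ x y, x ∈ C y ↔ (x, y) ∈ U := by intro x y; simp [hC]
  have hmemW : ∀ x' y, y ∈ W x' ↔ x' ∈ nbhd G (C y) := by intro x' y; simp [hW]
  -- |U| = Σ_y |C y|
  have n1 : U.card = ∑ y : β, (C y).card := by
    have hUeq : U = Finset.univ.filter (fun p : α × β => p.1 ∈ C p.2) := by
      ext ⟨a, b⟩; simp [hmemC]
    rw [hUeq]
    calc (Finset.univ.filter (fun p : α × β => p.1 ∈ C p.2)).card
        = ∑ y : β, (Finset.univ.filter (fun x => x ∈ C y)).card :=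
          card_filter_snd (fun a b => a ∈ C b)
      _ = ∑ y : β, (C y).card := Finset.sum_congr rfl fun y _ => by rw [univ_filter_mem]
  -- |N(U)| = Σ_{x'} |N_H(W x')|
  have n2 : (nbhd (tensorProd G H) U).card = ∑ x' : α, (nbhd H (W x')).card := by
    have hNUeq : nbhd (tensorProd G H) U
        = Finset.univ.filter (fun p : α × β => p.2 ∈ nbhd H (W p.1)) := by
      ext ⟨a, b⟩
      rw [mem_nbhd_iff, Finset.mem_filter]
      simp only [Finset.mem_univ, true_and]
      rw [mem_nbhd_iff]
      constructor
      · rintro ⟨⟨x, y⟩, hxy, hG, hH⟩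
        exact ⟨y, (hmemW a y).2 ((mem_nbhd_iff G (C y) a).2 ⟨x, (hmemC x y).2 hxy, hG⟩), hH⟩
      · rintro ⟨y, hy, hH⟩
        obtain ⟨x, hx, hG⟩ := (mem_nbhd_iff G (C y) a).1 ((hmemW a y).1 hy)
        exact ⟨(x, y), (hmemC x y).1 hx, hG, hH⟩
    rw [hNUeq]
    calc (Finset.univ.filter (fun p : α × β => p.2 ∈ nbhd H (W p.1))).card
        = ∑ x' : α, (Finset.univ.filter (fun y => y ∈ nbhd H (W x'))).card :=
          card_filter_fst (fun a b => b ∈ nbhd H (W a))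
      _ = ∑ x' : α, (nbhd H (W x')).card :=
          Finset.sum_congr rfl fun x' _ => by rw [univ_filter_mem]
  -- Σ_{x'} |W x'| = Σ_y |N_G(C y)|
  have n3 : ∑ x' : α, (W x').card = ∑ y : β, (nbhd G (C y)).card := by
    have h1 : (Finset.univ.filter (fun p : α × β => p.1 ∈ nbhd G (C p.2))).card
        = ∑ x' : α, (W x').card := by
      calc (Finset.univ.filter (fun p : α × β => p.1 ∈ nbhd G (C p.2))).card
          = ∑ x' : α, (Finset.univ.filter (fun y => x' ∈ nbhd G (C y))).card :=
            card_filter_fst (fun a b => a ∈ nbhd G (C b))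
        _ = ∑ x' : α, (W x').card := rfl
    have h2 : (Finset.univ.filter (fun p : α × β => p.1 ∈ nbhd G (C p.2))).card
        = ∑ y : β, (nbhd G (C y)).card := by
      calc (Finset.univ.filter (fun p : α × β => p.1 ∈ nbhd G (C p.2))).card
          = ∑ y : β, (Finset.univ.filter (fun x => x ∈ nbhd G (C y))).card :=
            card_filter_snd (fun a b => a ∈ nbhd G (C b))
        _ = ∑ y : β, (nbhd G (C y)).card :=
            Finset.sum_congr rfl fun y _ => by rw [univ_filter_mem]
    rw [← h1, h2]
  -- key claim
  have n5 : ∑ y : β, (C y ∩ nbhd G (C y)).card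
      ≤ ∑ x' : α, ((W x') \ nbhd H (W x')).card := by
    have hS1 : ∑ y : β, (C y ∩ nbhd G (C y)).card
        = (Finset.univ.filter (fun p : α × β => p.1 ∈ C p.2 ∩ nbhd G (C p.2))).card := by
      calc ∑ y : β, (C y ∩ nbhd G (C y)).card
          = ∑ y : β, (Finset.univ.filter (fun x => x ∈ C y ∩ nbhd G (C y))).card :=
            Finset.sum_congr rfl fun y _ => by rw [univ_filter_mem]
        _ = _ := (card_filter_snd (fun a b => a ∈ C b ∩ nbhd G (C b))).symm
    have hS2 : ∑ x' : α, ((W x') \ nbhd H (W x')).card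
        = (Finset.univ.filter (fun p : α × β => p.2 ∈ (W p.1) \ nbhd H (W p.1))).card := by
      calc ∑ x' : α, ((W x') \ nbhd H (W x')).card
          = ∑ x' : α, (Finset.univ.filter (fun y => y ∈ (W x') \ nbhd H (W x'))).card :=
            Finset.sum_congr rfl fun x' _ => by rw [univ_filter_mem]
        _ = _ := (card_filter_fst (fun a b => b ∈ (W a) \ nbhd H (W a))).symm
    rw [hS1, hS2]
    apply Finset.card_le_card
    rintro ⟨x, y⟩ hp
    rw [Finset.mem_filter] at hp ⊢
    refine ⟨Finset.mem_univ _, ?_⟩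
    obtain ⟨hxC, hxN⟩ := Finset.mem_inter.1 hp.2
    rw [Finset.mem_sdiff]
    refine ⟨(hmemW x y).2 hxN, ?_⟩
    intro hyN
    obtain ⟨y₀, hy₀, hadjH⟩ := (mem_nbhd_iff H (W x) y).1 hyN
    obtain ⟨x₁, hx₁, hadjG⟩ := (mem_nbhd_iff G (C y₀) x).1 ((hmemW x y₀).1 hy₀)
    exact hU (x₁, y₀) ((hmemC x₁ y₀).1 hx₁) (x, y) ((hmemC x y).1 hxC) ⟨hadjG, hadjH⟩
  -- real sums
  set bG := bRatio G
  set bH := bRatio H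
  set T : ℝ := ∑ y : β, ((C y).card : ℝ) with hT
  set Q : ℝ := ∑ y : β, (((C y) \ nbhd G (C y)).card : ℝ) with hQ
  set P : ℝ := ∑ x' : α, (((W x') \ nbhd H (W x')).card : ℝ) with hP
  set Wsum : ℝ := ∑ x' : α, ((W x').card : ℝ) with hWsum
  set NU : ℝ := ∑ x' : α, ((nbhd H (W x')).card : ℝ) with hNU
  set NG : ℝ := ∑ y : β, ((nbhd G (C y)).card : ℝ) with hNG
  have idW : ∀ x' : α, (((W x') ∩ nbhd H (W x')).card : ℝ)
      = ((W x').card : ℝ) - (((W x') \ nbhd H (W x')).card : ℝ) := by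
    intro x'
    have := Finset.card_sdiff_add_card_inter (W x') (nbhd H (W x'))
    have h' : ((((W x') \ nbhd H (W x')).card : ℝ)) + (((W x') ∩ nbhd H (W x')).card : ℝ)
        = ((W x').card : ℝ) := by exact_mod_cast this
    linarith
  have idC : ∀ y : β, (((C y) ∩ nbhd G (C y)).card : ℝ)
      = ((C y).card : ℝ) - (((C y) \ nbhd G (C y)).card : ℝ) := by
    intro y
    have := Finset.card_sdiff_add_card_inter (C y) (nbhd G (C y))
    have h' : ((((C y) \ nbhd G (C y)).card : ℝ)) + (((C y) ∩ nbhd G (C y)).card : ℝ)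
        = ((C y).card : ℝ) := by exact_mod_cast this
    linarith
  have F2 : Wsum - P + bH * P ≤ NU := by
    have hsum := Finset.sum_le_sum (s := (Finset.univ : Finset α))
      (fun x' _ => expansion H (W x'))
    rw [Finset.sum_add_distrib, ← Finset.mul_sum] at hsum
    have : ∑ x' : α, (((W x') ∩ nbhd H (W x')).card : ℝ) = Wsum - P := by
      rw [Finset.sum_congr rfl fun x' _ => idW x', Finset.sum_sub_distrib]
    rw [this] at hsum
    linarith
  have F4 : T - Q + bG * Q ≤ NG := by
    have hsum := Finset.sum_le_sum (s := (Finset.univ : Finset β))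
      (fun y _ => expansion G (C y))
    rw [Finset.sum_add_distrib, ← Finset.mul_sum] at hsum
    have : ∑ y : β, (((C y) ∩ nbhd G (C y)).card : ℝ) = T - Q := by
      rw [Finset.sum_congr rfl fun y _ => idC y, Finset.sum_sub_distrib]
    rw [this] at hsum
    linarith
  have F3 : Wsum = NG := by
    rw [hWsum, hNG]; exact_mod_cast n3
  have F5 : T - Q ≤ P := by
    have h5 : (∑ y : β, (((C y) ∩ nbhd G (C y)).card : ℝ)) ≤ P := by
      rw [hP]; exact_mod_cast n5
    have : ∑ y : β, (((C y) ∩ nbhd G (C y)).card : ℝ) = T - Q := by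
      rw [Finset.sum_congr rfl fun y _ => idC y, Finset.sum_sub_distrib]
    linarith [this ▸ h5]
  have F6 : P ≤ Wsum := by
    apply Finset.sum_le_sum
    intro x' _
    exact_mod_cast Finset.card_le_card (Finset.sdiff_subset)
  have hQ0 : 0 ≤ Q := Finset.sum_nonneg fun y _ => by positivity
  have hQT : Q ≤ T := by
    apply Finset.sum_le_sum
    intro y _
    exact_mod_cast Finset.card_le_card (Finset.sdiff_subset)
  have hT0 : 0 ≤ T := Finset.sum_nonneg fun y _ => by positivity
  have hP0 : 0 ≤ P := Finset.sum_nonneg fun x' _ => by positivity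
  have hcardU : (U.card : ℝ) = T := by rw [hT]; exact_mod_cast n1
  have hcardNU : ((nbhd (tensorProd G H) U).card : ℝ) = NU := by
    rw [hNU]; exact_mod_cast n2
  rw [hcardU, hcardNU]
  clear_value T Q P Wsum NU NG
  clear hT hQ hP hWsum hNU hNG idW idC n1 n2 n3 n5 hmemC hmemW hU hcardU hcardNU
  clear hC hW W C U
  rcases le_or_gt 1 bH with hbH1 | hbH1
  · rcases le_total bG bH with hc | hc
    · rw [min_eq_left hc]
      nlinarith [mul_nonneg (by linarith : (0:ℝ) ≤ bH - 1) (by linarith : (0:ℝ) ≤ P - (T - Q)),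
        mul_nonneg (by linarith : (0:ℝ) ≤ bH - bG) (by linarith : (0:ℝ) ≤ T - Q)]
    · rw [min_eq_right hc]
      nlinarith [mul_nonneg (by linarith : (0:ℝ) ≤ bH - 1) (by linarith : (0:ℝ) ≤ P - (T - Q)),
        mul_nonneg (by linarith : (0:ℝ) ≤ bG - bH) hQ0]
  · have hbG1 : 1 ≤ bG := by
      rcases h with h | h
      · exact h
      · exact absurd h (by push_neg; exact hbH1)
    rw [min_eq_right (by linarith : bH ≤ bG)]
    have hWT : T ≤ Wsum := by nlinarith [mul_nonneg (by linarith : (0:ℝ) ≤ bG - 1) hQ0]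
    nlinarith [mul_nonneg (by linarith : (0:ℝ) ≤ 1 - bH) (by linarith : (0:ℝ) ≤ Wsum - P),
      mul_nonneg hbH0 (by linarith : (0:ℝ) ≤ Wsum - T)]
end
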